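/- arXiv:2605.09315 — 3 statements merged into one kernel-verified Lean document; each statement's English description precedes it below -/
import Mathlib

section
/- Let H, M be symmetric matrices on ℝ^n with H positive semidefinite and M positive definite, λ > 0, g ∈ ℝ^n, and set Δ_λ = -(H + λM)⁻¹ g. Then Δ_λᵀ M Δ_λ ≤ λ⁻² · gᵀ M⁻¹ g. -/
open Matrix

theorem stmt_4 {n : ℕ} (H M : Matrix (Fin n) (Fin n) ℝ)
    (hH : H.PosSemidef) (hM : M.PosDef) (lam : ℝ) (hlam : 0 < lam)
    (g : Fin n → ℝ)
    (Δ : Fin n → ℝ) (hΔ : Δ = -((H + lam • M)⁻¹.mulVec g)) :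
    Δ ⬝ᵥ M.mulVec Δ ≤ lam⁻¹ ^ 2 * (g ⬝ᵥ M⁻¹.mulVec g) := by
  set A := H + lam • M with hA
  have hlM : (lam • M).PosDef := by
    refine .of_dotProduct_mulVec_pos ?_ fun x hx => ?_
    · show (lam • M)ᴴ = lam • M
      rw [conjTranspose_smul, hM.1]
      simp
    rw [smul_mulVec, dotProduct_smul, smul_eq_mul]
    exact mul_pos hlam (hM.dotProduct_mulVec_pos hx)
  have hApd : A.PosDef := Matrix.PosDef.posSemidef_add hH hlM
  have hAdet : IsUnit A.det := hApd.det_pos.ne'.isUnit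
  have hMdet : IsUnit M.det := hM.det_pos.ne'.isUnit
  have hMsymm : Mᵀ = M := hM.1
  have hHsymm : Hᵀ = H := hH.1
  have hAΔ : A *ᵥ Δ = -g := by
    rw [hΔ, mulVec_neg, mulVec_mulVec, mul_nonsing_inv _ hAdet, one_mulVec]
  have hg : g = -(A *ᵥ Δ) := by rw [hAΔ, neg_neg]
  set u := H *ᵥ Δ with hu
  set v := M *ᵥ Δ with hv
  have hAΔ' : A *ᵥ Δ = u + lam • v := by
    rw [hA, add_mulVec, smul_mulVec]
  have hMinv_v : M⁻¹ *ᵥ v = Δ := by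
    rw [hv, mulVec_mulVec, nonsing_inv_mul _ hMdet, one_mulVec]
  have key : ∀ w : Fin n → ℝ, v ⬝ᵥ M⁻¹ *ᵥ w = Δ ⬝ᵥ w := by
    intro w
    rw [hv, dotProduct_mulVec, ← mulVec_transpose, transpose_nonsing_inv, hMsymm,
      mulVec_mulVec, nonsing_inv_mul _ hMdet, one_mulVec]
  have hexp : g ⬝ᵥ M⁻¹ *ᵥ g
      = u ⬝ᵥ M⁻¹ *ᵥ u + 2 * lam * (Δ ⬝ᵥ u) + lam ^ 2 * (Δ ⬝ᵥ v) := by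
    rw [hg, neg_dotProduct, mulVec_neg, dotProduct_neg, neg_neg, hAΔ',
      add_dotProduct, mulVec_add, dotProduct_add, dotProduct_add,
      smul_dotProduct, mulVec_smul, dotProduct_smul, dotProduct_smul,
      hMinv_v, key u, dotProduct_comm u Δ]
    simp only [smul_dotProduct, smul_eq_mul, dotProduct_comm v Δ]
    ring
  have h1 : 0 ≤ u ⬝ᵥ M⁻¹ *ᵥ u := by
    have := hM.inv.posSemidef.dotProduct_mulVec_nonneg u
    simpa only [star_trivial] using this
  have h2 : 0 ≤ Δ ⬝ᵥ u := by
    have := hH.dotProduct_mulVec_nonneg Δ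
    simpa only [star_trivial] using this
  rw [hexp]
  have hl2 : (0:ℝ) < lam ^ 2 := by positivity
  rw [inv_pow]
  rw [← sub_nonneg]
  have : (lam ^ 2)⁻¹ * (u ⬝ᵥ M⁻¹ *ᵥ u + 2 * lam * (Δ ⬝ᵥ u) + lam ^ 2 * (Δ ⬝ᵥ v))
      - Δ ⬝ᵥ v = (lam ^ 2)⁻¹ * (u ⬝ᵥ M⁻¹ *ᵥ u) + 2 * lam⁻¹ * (Δ ⬝ᵥ u) := by
    field_simp
    ring
  rw [this]
  positivity
end

section
/- Let H_old, M be symmetric matrices on ℝ^n with H_old positive semidefinite, M positive definite, and suppose there exists c > 0 with H_old ≼ cM (i.e. cM - H_old is positive semidefinite). Let H be positive semidefinite symmetric, λ > 0, g ∈ ℝ^n, and Δ_λ = -(H + λM)⁻¹ g. Then (1/2)Δ_λᵀ H_old Δ_λ ≤ (c/(2λ²)) · gᵀ M⁻¹ g. -/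
open Matrix

private lemma symm_bilin {n : ℕ} (M : Matrix (Fin n) (Fin n) ℝ) (hs : Mᵀ = M)
    (a b : Fin n → ℝ) : a ⬝ᵥ M.mulVec b = b ⬝ᵥ M.mulVec a := by
  rw [dotProduct_mulVec, ← mulVec_transpose, hs, dotProduct_comm]

theorem stmt_5 {n : ℕ} (Hold M H : Matrix (Fin n) (Fin n) ℝ)
    (hHold : Hold.PosSemidef) (hM : M.PosDef) (hH : H.PosSemidef)
    (c : ℝ) (hc : 0 < c) (hdom : (c • M - Hold).PosSemidef)
    (lam : ℝ) (hlam : 0 < lam) (g : Fin n → ℝ)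
    (Δ : Fin n → ℝ) (hΔ : Δ = -((H + lam • M)⁻¹.mulVec g)) :
    (1/2) * (Δ ⬝ᵥ Hold.mulVec Δ) ≤ (c / (2 * lam ^ 2)) * (g ⬝ᵥ M⁻¹.mulVec g) := by
  have hMsym : Mᵀ = M := hM.isHermitian
  have hMsmul : (lam • M).PosDef := by
    refine posDef_iff_dotProduct_mulVec.mpr ⟨by simp only [Matrix.IsHermitian, conjTranspose_smul, star_trivial]; rw [hM.1.eq], fun x hx => ?_⟩
    rw [smul_mulVec, dotProduct_smul, smul_eq_mul]
    exact mul_pos hlam ((posDef_iff_dotProduct_mulVec.mp hM).2 hx)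
  have hApd : (H + lam • M).PosDef := Matrix.PosDef.posSemidef_add hH hMsmul
  set A := H + lam • M with hA
  set y := A⁻¹.mulVec g with hy
  set z := M⁻¹.mulVec g with hz
  have hAdet : IsUnit A.det := (isUnit_iff_isUnit_det A).mp hApd.isUnit
  have hMdet : IsUnit M.det := (isUnit_iff_isUnit_det M).mp hM.isUnit
  have hAy : A.mulVec y = g := by
    rw [hy, mulVec_mulVec, mul_nonsing_inv A hAdet, one_mulVec]
  have hMz : M.mulVec z = g := by
    rw [hz, mulVec_mulVec, mul_nonsing_inv M hMdet, one_mulVec]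
  -- abbreviations for quadratic forms
  set qM : ℝ := y ⬝ᵥ M.mulVec y with hqM
  set qI : ℝ := g ⬝ᵥ M⁻¹.mulVec g with hqI
  have hqIz : qI = z ⬝ᵥ M.mulVec z := by
    rw [hqI, ← hz, hMz, dotProduct_comm]
  have hqM0 : 0 ≤ qM := by simpa only [star_trivial] using (posSemidef_iff_dotProduct_mulVec.mp hM.posSemidef).2 y
  have hqI0 : 0 ≤ qI := by
    rw [hqIz]; simpa only [star_trivial] using (posSemidef_iff_dotProduct_mulVec.mp hM.posSemidef).2 z
  -- y ⬝ g ≥ lam * qM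
  have hyg : lam * qM ≤ y ⬝ᵥ g := by
    have : y ⬝ᵥ g = y ⬝ᵥ H.mulVec y + lam * qM := by
      rw [← hAy, hA, add_mulVec, smul_mulVec, dotProduct_add, dotProduct_smul,
        smul_eq_mul]
    rw [this]
    have h2 := (posSemidef_iff_dotProduct_mulVec.mp hH).2 y
    rw [star_trivial] at h2
    linarith
  -- Cauchy–Schwarz: (y ⬝ g)^2 ≤ qM * qI
  have hCS : (y ⬝ᵥ g) ^ 2 ≤ qM * qI := by
    have hyMz : y ⬝ᵥ M.mulVec z = y ⬝ᵥ g := by rw [hMz]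
    have key : ∀ t : ℝ, 0 ≤ qM * (t * t) + (2 * (y ⬝ᵥ g)) * t + qI := by
      intro t
      have h0 := (posSemidef_iff_dotProduct_mulVec.mp hM.posSemidef).2 (t • y + z)
      rw [star_trivial] at h0
      have hexp : (t • y + z) ⬝ᵥ M.mulVec (t • y + z)
          = qM * (t * t) + (2 * (y ⬝ᵥ g)) * t + qI := by
        rw [mulVec_add, mulVec_smul, dotProduct_add, add_dotProduct, add_dotProduct,
          dotProduct_smul, smul_dotProduct, dotProduct_smul, smul_dotProduct,
          symm_bilin M hMsym z y, hyMz, hqIz]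
        simp only [smul_eq_mul]
        ring
      rw [hexp] at h0
      exact h0
    have hd := discrim_le_zero key
    rw [discrim] at hd
    nlinarith [hd]
  -- domination: y Hold y ≤ c * qM
  have hdom' : y ⬝ᵥ Hold.mulVec y ≤ c * qM := by
    have h0 := (posSemidef_iff_dotProduct_mulVec.mp hdom).2 y
    rw [star_trivial, sub_mulVec, smul_mulVec, dotProduct_sub, dotProduct_smul,
      smul_eq_mul] at h0
    linarith
  -- Δ quadratic form equals y quadratic form
  have hΔy : Δ ⬝ᵥ Hold.mulVec Δ = y ⬝ᵥ Hold.mulVec y := by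
    rw [hΔ]
    simp [mulVec_neg, neg_dotProduct, dotProduct_neg, ← hA, ← hy]
  rw [hΔy]
  -- key bound: lam^2 * qM ≤ qI
  have hkey : lam ^ 2 * qM ≤ qI := by
    rcases eq_or_lt_of_le hqM0 with h | h
    · rw [← h]; simpa using hqI0
    · have hlq : 0 ≤ lam * qM := mul_nonneg hlam.le hqM0
      have h1 : (lam * qM) * (lam * qM) ≤ (y ⬝ᵥ g) * (y ⬝ᵥ g) :=
        mul_le_mul hyg hyg hlq (hlq.trans hyg)
      nlinarith [h1, hCS, h]
  have hlam2 : (0:ℝ) < lam ^ 2 := by positivity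
  rw [div_mul_eq_mul_div, div_mul_eq_mul_div,
    div_le_div_iff₀ (by norm_num) (by positivity)]
  nlinarith [hdom', hkey, hc.le, hqM0, hlam2]
end

section
/- Let H, M be symmetric matrices on ℝ^n with H positive semidefinite and M positive definite, g ∈ ℝ^n, and 0 < λ₁ ≤ λ₂. Then Δ_{λ₂}ᵀ M Δ_{λ₂} ≤ Δ_{λ₁}ᵀ M Δ_{λ₁}, where Δ_λ = -(H + λM)⁻¹g; i.e., increasing the preservation strength λ decreases the M-norm of the CPE update. -/
open Matrix


private lemma stmt_18_aux {a b c lam₁ lam₂ : ℝ} (h₁ : 0 < lam₁) (h₁₂ : lam₁ ≤ lam₂)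
    (ha : 0 ≤ a) (hb : 0 ≤ b) (hcs : c ^ 2 ≤ a * b)
    (hkey : lam₁ * a + lam₂ * b ≤ (lam₁ + lam₂) * c) : b ≤ a := by
  have h₂ : 0 < lam₂ := lt_of_lt_of_le h₁ h₁₂
  have hc0 : 0 ≤ c := by nlinarith
  have h5 : (lam₁ * a + lam₂ * b) * (lam₁ * a + lam₂ * b)
      ≤ ((lam₁ + lam₂) * c) * ((lam₁ + lam₂) * c) :=
    mul_self_le_mul_self (by positivity) hkey
  have h6 : lam₁ ^ 2 * a ^ 2 + lam₂ ^ 2 * b ^ 2 ≤ (lam₁ ^ 2 + lam₂ ^ 2) * (a * b) := by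
    nlinarith [mul_le_mul_of_nonneg_left hcs (sq_nonneg (lam₁ + lam₂))]
  by_contra hlt
  push_neg at hlt
  have hfac : 0 < lam₂ ^ 2 * b - lam₁ ^ 2 * a := by
    nlinarith [mul_pos (mul_pos h₁ h₁) (sub_pos.2 hlt),
      mul_le_mul_of_nonneg_right (by nlinarith : lam₁ ^ 2 ≤ lam₂ ^ 2) hb]
  have hpos : 0 < (b - a) * (lam₂ ^ 2 * b - lam₁ ^ 2 * a) :=
    mul_pos (sub_pos.2 hlt) hfac
  nlinarith [h6, hpos]

theorem stmt_18 {n : ℕ} (H M : Matrix (Fin n) (Fin n) ℝ)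
    (hH : H.PosSemidef) (hM : M.PosDef) (g : Fin n → ℝ)
    (lam₁ lam₂ : ℝ) (h₁ : 0 < lam₁) (h₁₂ : lam₁ ≤ lam₂)
    (Δ : ℝ → (Fin n → ℝ)) (hΔ : ∀ lam, Δ lam = -((H + lam • M)⁻¹.mulVec g)) :
    Δ lam₂ ⬝ᵥ M.mulVec (Δ lam₂) ≤ Δ lam₁ ⬝ᵥ M.mulVec (Δ lam₁) := by
  have h₂ : 0 < lam₂ := lt_of_lt_of_le h₁ h₁₂
  have hsmul : ∀ l : ℝ, 0 < l → (l • M).PosDef := by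
    intro l hl
    refine Matrix.PosDef.of_dotProduct_mulVec_pos ?_ (fun x hx => ?_)
    · show (l • M)ᴴ = l • M
      rw [conjTranspose_smul, hM.1.eq, star_trivial]
    rw [smul_mulVec, dotProduct_smul]
    exact mul_pos hl (hM.dotProduct_mulVec_pos hx)
  have hB₁ : (H + lam₁ • M).PosDef := Matrix.PosDef.posSemidef_add hH (hsmul _ h₁)
  have hB₂ : (H + lam₂ • M).PosDef := Matrix.PosDef.posSemidef_add hH (hsmul _ h₂)
  set u₁ : Fin n → ℝ := (H + lam₁ • M)⁻¹.mulVec g with hu₁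
  set u₂ : Fin n → ℝ := (H + lam₂ • M)⁻¹.mulVec g with hu₂
  have key : ∀ (B : Matrix (Fin n) (Fin n) ℝ), B.PosDef → B *ᵥ (B⁻¹ *ᵥ g) = g := by
    intro B hB
    rw [mulVec_mulVec, Matrix.mul_nonsing_inv _ (isUnit_iff_isUnit_det _ |>.1 hB.isUnit),
      one_mulVec]
  have e₁ : H *ᵥ u₁ + lam₁ • (M *ᵥ u₁) = g := by
    have := key _ hB₁
    rwa [add_mulVec, smul_mulVec] at this
  have e₂ : H *ᵥ u₂ + lam₂ • (M *ᵥ u₂) = g := by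
    have := key _ hB₂
    rwa [add_mulVec, smul_mulVec] at this
  have hMt : Mᵀ = M := by simpa using hM.1.eq
  have msym : ∀ x y : Fin n → ℝ, x ⬝ᵥ M *ᵥ y = y ⬝ᵥ M *ᵥ x := by
    intro x y
    rw [dotProduct_mulVec, ← mulVec_transpose, hMt]
    exact dotProduct_comm _ _
  set a : ℝ := u₁ ⬝ᵥ M *ᵥ u₁ with ha'
  set b : ℝ := u₂ ⬝ᵥ M *ᵥ u₂ with hb'
  set c : ℝ := u₁ ⬝ᵥ M *ᵥ u₂ with hc'
  have ha : 0 ≤ a := by simpa using hM.posSemidef.dotProduct_mulVec_nonneg u₁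
  have hb : 0 ≤ b := by simpa using hM.posSemidef.dotProduct_mulVec_nonneg u₂
  -- Cauchy–Schwarz in the M-inner product:  c^2 ≤ a * b
  have hcs : c ^ 2 ≤ a * b := by
    have hquad : ∀ t : ℝ, 0 ≤ b * (t * t) + (2 * c) * t + a := by
      intro t
      have h0 : 0 ≤ (u₁ + t • u₂) ⬝ᵥ M *ᵥ (u₁ + t • u₂) := by
        simpa using hM.posSemidef.dotProduct_mulVec_nonneg (u₁ + t • u₂)
      have hexp : (u₁ + t • u₂) ⬝ᵥ M *ᵥ (u₁ + t • u₂)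
          = b * (t * t) + (2 * c) * t + a := by
        have hsym := msym u₂ u₁
        simp only [mulVec_add, mulVec_smul, dotProduct_add, add_dotProduct,
          dotProduct_smul, smul_dotProduct, smul_eq_mul]
        rw [hsym]
        ring
      linarith [hexp ▸ h0]
    have hd := discrim_le_zero hquad
    rw [discrim] at hd
    nlinarith [hd]
  -- Key inequality from PSD of H applied to d = u₁ - u₂
  have hHd : 0 ≤ (u₁ - u₂) ⬝ᵥ H *ᵥ (u₁ - u₂) := by simpa using hH.dotProduct_mulVec_nonneg (u₁ - u₂)
  have hHsub : H *ᵥ (u₁ - u₂) = lam₂ • (M *ᵥ u₂) - lam₁ • (M *ᵥ u₁) := by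
    have : H *ᵥ u₁ + lam₁ • (M *ᵥ u₁) = H *ᵥ u₂ + lam₂ • (M *ᵥ u₂) := by
      rw [e₁, e₂]
    rw [mulVec_sub]
    funext i
    have := congrFun this i
    simp only [Pi.add_apply, Pi.smul_apply, smul_eq_mul] at this
    simp only [Pi.sub_apply, Pi.smul_apply, smul_eq_mul]
    linarith
  have hkey : lam₁ * a + lam₂ * b ≤ (lam₁ + lam₂) * c := by
    have hsym := msym u₂ u₁
    have hexp : (u₁ - u₂) ⬝ᵥ H *ᵥ (u₁ - u₂)
        = (lam₁ + lam₂) * c - lam₁ * a - lam₂ * b := by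
      rw [hHsub]
      simp only [sub_dotProduct, dotProduct_sub, dotProduct_smul, smul_eq_mul]
      rw [hsym]
      ring
    linarith [hexp ▸ hHd]
  -- Conclude b ≤ a
  have hba : b ≤ a := stmt_18_aux h₁ h₁₂ ha hb hcs hkey
  have hd₁ : Δ lam₁ ⬝ᵥ M *ᵥ Δ lam₁ = a := by
    rw [hΔ, neg_dotProduct, mulVec_neg, dotProduct_neg, neg_neg]
  have hd₂ : Δ lam₂ ⬝ᵥ M *ᵥ Δ lam₂ = b := by
    rw [hΔ, neg_dotProduct, mulVec_neg, dotProduct_neg, neg_neg]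
  rw [hd₁, hd₂]
  exact hba
end
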